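/- Let k be a field of characteristic 2 and λ ∈ k. The multiplication on C_k defined by c² = c + λs, cs = sc = λs, s² = (λ+1)s, with unit c + s, makes the trigonometric coalgebra C_k into a bialgebra. -/

import Mathlib

open TensorProduct

/-- basis vector `c` of the trigonometric coalgebra -/
def trigC (k : Type*) [Field k] : k × k := (1, 0)
/-- basis vector `s` of the trigonometric coalgebra -/
def trigS (k : Type*) [Field k] : k × k := (0, 1)

/-- comultiplication of the trigonometric coalgebra:
`Δ(c) = c⊗c - s⊗s`, `Δ(s) = s⊗c + c⊗s`. -/
noncomputable def trigComul (k : Type*) [Field k] :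
    (k × k) →ₗ[k] (k × k) ⊗[k] (k × k) :=
  (LinearMap.fst k k k).smulRight (trigC k ⊗ₜ trigC k - trigS k ⊗ₜ trigS k) +
  (LinearMap.snd k k k).smulRight (trigS k ⊗ₜ trigC k + trigC k ⊗ₜ trigS k)

/-- counit of the trigonometric coalgebra: `ε(c) = 1`, `ε(s) = 0`. -/
def trigCounit (k : Type*) [Field k] : (k × k) →ₗ[k] k := LinearMap.fst k k k

/-- A bialgebra structure on a fixed `k`-coalgebra `(V, Δ, ε)`: an associative
unital `k`-bilinear multiplication for which `Δ` and `ε` are algebra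
homomorphisms (the multiplication on `V ⊗ V` being the componentwise one). -/
structure BialgebraStructure (k V : Type*) [CommRing k] [AddCommGroup V] [Module k V]
    (Δ : V →ₗ[k] V ⊗[k] V) (ε : V →ₗ[k] k) where
  mul : V →ₗ[k] V →ₗ[k] V
  one : V
  mul_assoc : ∀ x y z : V, mul (mul x y) z = mul x (mul y z)
  one_mul : ∀ x : V, mul one x = x
  mul_one : ∀ x : V, mul x one = x
  comul_one : Δ one = one ⊗ₜ[k] one
  comul_mul : ∀ x y : V, Δ (mul x y) = TensorProduct.map₂ mul mul (Δ x) (Δ y)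
  counit_one : ε one = 1
  counit_mul : ∀ x y : V, ε (mul x y) = ε x * ε y

/-- the multiplication `c² = c + l s`, `cs = sc = l s`, `s² = (l+1) s` as a bilinear map -/
noncomputable def trigMul (k : Type*) [Field k] (l : k) :
    (k × k) →ₗ[k] (k × k) →ₗ[k] (k × k) :=
  LinearMap.mk₂ k
    (fun x y => (x.1 * y.1,
      l * x.1 * y.1 + l * x.1 * y.2 + l * x.2 * y.1 + (l + 1) * x.2 * y.2))
    (by intros; simp [Prod.ext_iff]; constructor <;> ring)
    (by intros; simp [Prod.ext_iff, smul_eq_mul]; constructor <;> ring)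
    (by intros; simp [Prod.ext_iff]; constructor <;> ring)
    (by intros; simp [Prod.ext_iff, smul_eq_mul]; constructor <;> ring)

@[simp] theorem trigMul_apply (k : Type*) [Field k] (l : k) (x y : k × k) :
    trigMul k l x y = (x.1 * y.1,
      l * x.1 * y.1 + l * x.1 * y.2 + l * x.2 * y.1 + (l + 1) * x.2 * y.2) := rfl

/-- explicit identification of `(k×k) ⊗ (k×k)` with `(k×k) × (k×k)` -/
noncomputable def trigEquiv (k : Type*) [Field k] :
    (k × k) ⊗[k] (k × k) ≃ₗ[k] (k × k) × (k × k) :=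
  (TensorProduct.prodRight k k (k × k) k k).trans
    ((TensorProduct.rid k (k × k)).prodCongr (TensorProduct.rid k (k × k)))

@[simp] theorem trigEquiv_tmul (k : Type*) [Field k] (m : k × k) (a b : k) :
    trigEquiv k (m ⊗ₜ[k] (a, b)) = (a • m, b • m) := by
  simp [trigEquiv]

/-- In characteristic 2, for every `λ = l ∈ k` the multiplication table
`c² = c + l s`, `cs = sc = l s`, `s² = (l+1) s`, with unit `c + s`, makes the
trigonometric coalgebra a bialgebra. -/
theorem trig_bialgebra_char_two (k : Type*) [Field k] [CharP k 2] (l : k) :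
    ∃ B : BialgebraStructure k (k × k) (trigComul k) (trigCounit k),
      B.mul (trigC k) (trigC k) = trigC k + l • trigS k ∧
      B.mul (trigC k) (trigS k) = l • trigS k ∧
      B.mul (trigS k) (trigC k) = l • trigS k ∧
      B.mul (trigS k) (trigS k) = (l + 1) • trigS k ∧
      B.one = trigC k + trigS k := by
  have h2 : (2 : k) = 0 := by exact_mod_cast CharP.cast_eq_zero k 2
  have h4 : (4 : k) = 0 := by rw [show (4:k) = 2 * 2 by norm_num, h2, mul_zero]
  refine ⟨⟨trigMul k l, (1, 1), ?massoc, ?onemul, ?mulone, ?comulone, ?comulmul, ?counitone, ?counitmul⟩, ?_, ?_, ?_, ?_, ?_⟩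
  case massoc =>
    intro x y z
    simp only [trigMul_apply, Prod.ext_iff]
    constructor <;>
      (first | ring1 |
        (ring_nf;
         simp only [h2, h4, mul_zero, zero_mul, neg_zero, add_zero, zero_add, sub_zero,
           zero_sub, neg_eq_zero, neg_neg, CharTwo.neg_eq];
         try ring1))
  case onemul =>
    intro x
    simp only [trigMul_apply, Prod.ext_iff]
    constructor <;>
      (first | ring1 |
        linear_combination (l * x.1 + l * x.2) * h2)
  case mulone =>
    intro x
    simp only [trigMul_apply, Prod.ext_iff]
    constructor <;>
      (first | ring1 |
        linear_combination (l * x.1 + l * x.2) * h2)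
  case comulone =>
    apply (trigEquiv k).injective
    show trigEquiv k (trigComul k ((1,1) : k × k)) = trigEquiv k (((1,1) : k × k) ⊗ₜ[k] ((1,1) : k × k))
    simp only [trigComul, trigC, trigS, LinearMap.add_apply, LinearMap.coe_smulRight,
      LinearMap.fst_apply, LinearMap.snd_apply, map_add, map_sub, map_smul,
      trigEquiv_tmul, Prod.smul_mk, smul_eq_mul, Prod.mk_add_mk, Prod.mk_sub_mk, Prod.ext_iff]
    and_intros <;> (first | ring1 | linear_combination h2 | linear_combination -h2)
  case comulmul =>
    intro x y
    apply (trigEquiv k).injective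
    simp only [trigComul, trigC, trigS, LinearMap.add_apply, LinearMap.coe_smulRight,
      LinearMap.fst_apply, LinearMap.snd_apply, map_add, map_sub, map_smul,
      LinearMap.sub_apply, LinearMap.smul_apply,
      map₂_apply_tmul, map_tmul, trigMul_apply, trigEquiv_tmul,
      Prod.smul_mk, smul_eq_mul, Prod.mk_add_mk, Prod.mk_sub_mk, Prod.ext_iff]
    and_intros <;> (try ring1) <;>
      (ring_nf;
       simp only [h2, h4, mul_zero, zero_mul, neg_zero, add_zero, zero_add, sub_zero,
         zero_sub, neg_eq_zero, neg_neg, CharTwo.neg_eq];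
       try ring1)
  case counitone => simp [trigCounit]
  case counitmul => intro x y; simp [trigCounit]
  all_goals
    simp [trigC, trigS, Prod.ext_iff] <;> try ring
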